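/- arXiv:2404.11231 — 5 statements merged into one kernel-verified Lean document; each statement's English description precedes it below -/
import Mathlib

section
/- Let Λ₀, Λ₁, Λ₂ be three proper sublattices of ℤ² (i.e., each of finite index greater than 1) whose union is all of ℤ². Then, up to a permutation of indices, Λ₀ = {(u,v) ∈ ℤ² : u ≡ 0 mod 2}, Λ₁ = {(u,v) ∈ ℤ² : v ≡ 0 mod 2}, and Λ₂ = {(u,v) ∈ ℤ² : u + v ≡ 0 mod 2}. -/
/-- The sublattice `{(u,v) ∈ ℤ² : u ≡ 0 mod 2}`. -/
def latU : AddSubgroup (ℤ × ℤ) where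
  carrier := {p | 2 ∣ p.1}
  add_mem' := fun ha hb => dvd_add ha hb
  zero_mem' := dvd_zero 2
  neg_mem' := fun h => by simpa using h

/-- The sublattice `{(u,v) ∈ ℤ² : v ≡ 0 mod 2}`. -/
def latV : AddSubgroup (ℤ × ℤ) where
  carrier := {p | 2 ∣ p.2}
  add_mem' := fun ha hb => dvd_add ha hb
  zero_mem' := dvd_zero 2
  neg_mem' := fun h => by simpa using h

/-- The sublattice `{(u,v) ∈ ℤ² : u + v ≡ 0 mod 2}`. -/
def latS : AddSubgroup (ℤ × ℤ) where
  carrier := {p | 2 ∣ p.1 + p.2}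
  add_mem' := by
    intro a b ha hb
    have h := dvd_add ha hb
    have : (a.1 + a.2) + (b.1 + b.2) = (a + b).1 + (a + b).2 := by
      simp [Prod.fst_add, Prod.snd_add]; ring
    simpa [this] using h
  zero_mem' := by simp
  neg_mem' := by
    intro a ha
    have h : (2 : ℤ) ∣ -(a.1 + a.2) := (dvd_neg).mpr ha
    simpa [neg_add, add_comm] using h

section Aux

variable {G : Type*} [AddCommGroup G]

/-- Two proper subgroups cannot cover: there is an element outside both. -/
lemma aux_not_two_cover (B C : AddSubgroup G) (hB : B ≠ ⊤) (hC : C ≠ ⊤) :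
    ∃ x, x ∉ B ∧ x ∉ C := by
  have hxB : ∃ x, x ∉ B := by
    by_contra h; push_neg at h; exact hB ((AddSubgroup.eq_top_iff' B).mpr h)
  have hyC : ∃ y, y ∉ C := by
    by_contra h; push_neg at h; exact hC ((AddSubgroup.eq_top_iff' C).mpr h)
  obtain ⟨x, hx⟩ := hxB
  obtain ⟨y, hy⟩ := hyC
  by_cases hxC : x ∈ C
  · by_cases hyB : y ∈ B
    · refine ⟨x + y, ?_, ?_⟩
      · intro h; exact hx (by simpa using B.sub_mem h hyB)
      · intro h; exact hy (by simpa using C.sub_mem h hxC)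
    · exact ⟨y, hyB, hy⟩
  · exact ⟨x, hx, hxC⟩

/-- Key step: if `g ∈ A \ B` and `b ∈ B \ A`, then `g + g` lies in the third
subgroup `C` of a covering triple. -/
lemma aux_step (A B C : AddSubgroup G) (hcov : ∀ x, x ∈ A ∨ x ∈ B ∨ x ∈ C)
    {b g : G} (hb : b ∈ B) (hbA : b ∉ A) (hg : g ∈ A) (hgB : g ∉ B) :
    g + g ∈ C := by
  have h1 : g + b ∈ C := by
    rcases hcov (g + b) with h | h | h
    · exact absurd (by simpa using A.sub_mem h hg) hbA
    · exact absurd (by simpa using B.sub_mem h hb) hgB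
    · exact h
  have h2 : g - b ∈ C := by
    rcases hcov (g - b) with h | h | h
    · exact absurd (by simpa using A.sub_mem hg h) hbA
    · exact absurd (by simpa using B.add_mem h hb) hgB
    · exact h
  have : g + g = (g + b) + (g - b) := by abel
  rw [this]
  exact C.add_mem h1 h2

/-- An element cannot lie in exactly two subgroups of a covering triple. -/
lemma aux_no_two (A B C : AddSubgroup G) (hcov : ∀ x, x ∈ A ∨ x ∈ B ∨ x ∈ C)
    {c g : G} (hc : c ∈ C) (hcA : c ∉ A) (hcB : c ∉ B)
    (hgA : g ∈ A) (hgB : g ∈ B) (hgC : g ∉ C) : False := by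
  rcases hcov (g + c) with h | h | h
  · exact hcA (by simpa using A.sub_mem h hgA)
  · exact hcB (by simpa using B.sub_mem h hgB)
  · exact hgC (by simpa using C.sub_mem h hc)

/-- If three proper subgroups cover an abelian group, then the double of any
element lies in all three. -/
lemma aux_twice (A B C : AddSubgroup G) (hcov : ∀ x, x ∈ A ∨ x ∈ B ∨ x ∈ C)
    (hA : A ≠ ⊤) (hB : B ≠ ⊤) (hC : C ≠ ⊤) (g : G) :
    g + g ∈ A ∧ g + g ∈ B ∧ g + g ∈ C := by
  obtain ⟨a, haB, haC⟩ := aux_not_two_cover B C hB hC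
  have haA : a ∈ A := by rcases hcov a with h | h | h <;> tauto
  obtain ⟨b, hbA, hbC⟩ := aux_not_two_cover A C hA hC
  have hbB : b ∈ B := by rcases hcov b with h | h | h <;> tauto
  obtain ⟨c, hcA, hcB⟩ := aux_not_two_cover A B hA hB
  have hcC : c ∈ C := by rcases hcov c with h | h | h <;> tauto
  have covACB : ∀ x, x ∈ A ∨ x ∈ C ∨ x ∈ B := fun x => by rcases hcov x with h|h|h <;> tauto
  have covBAC : ∀ x, x ∈ B ∨ x ∈ A ∨ x ∈ C := fun x => by rcases hcov x with h|h|h <;> tauto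
  have covBCA : ∀ x, x ∈ B ∨ x ∈ C ∨ x ∈ A := fun x => by rcases hcov x with h|h|h <;> tauto
  have covCAB : ∀ x, x ∈ C ∨ x ∈ A ∨ x ∈ B := fun x => by rcases hcov x with h|h|h <;> tauto
  have covCBA : ∀ x, x ∈ C ∨ x ∈ B ∨ x ∈ A := fun x => by rcases hcov x with h|h|h <;> tauto
  by_cases hgA : g ∈ A <;> by_cases hgB : g ∈ B <;> by_cases hgC : g ∈ C
  · exact ⟨A.add_mem hgA hgA, B.add_mem hgB hgB, C.add_mem hgC hgC⟩
  · exact absurd (aux_no_two A B C hcov hcC hcA hcB hgA hgB hgC) id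
  · exact absurd (aux_no_two A C B covACB hbB hbA hbC hgA hgC hgB) id
  · exact ⟨A.add_mem hgA hgA, aux_step A C B covACB hcC hcA hgA hgC,
      aux_step A B C hcov hbB hbA hgA hgB⟩
  · exact absurd (aux_no_two B C A covBCA haA haB haC hgB hgC hgA) id
  · exact ⟨aux_step B C A covBCA hcC hcB hgB hgC, B.add_mem hgB hgB,
      aux_step B A C covBAC haA haB hgB hgA⟩
  · exact ⟨aux_step C B A covCBA hbB hbC hgC hgB, aux_step C A B covCAB haA haC hgC hgA,
      C.add_mem hgC hgC⟩
  · rcases hcov g with h | h | h <;> tauto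

end Aux

lemma aux_top (H : AddSubgroup (ℤ × ℤ)) (h10 : ((1, 0) : ℤ × ℤ) ∈ H)
    (h01 : ((0, 1) : ℤ × ℤ) ∈ H) : H = ⊤ := by
  rw [AddSubgroup.eq_top_iff']
  intro ⟨u, v⟩
  have : ((u, v) : ℤ × ℤ) = u • ((1, 0) : ℤ × ℤ) + v • ((0, 1) : ℤ × ℤ) := by
    simp [Prod.ext_iff]
  rw [this]
  exact H.add_mem (H.zsmul_mem h10 u) (H.zsmul_mem h01 v)

lemma aux_latU (H : AddSubgroup (ℤ × ℤ)) (hH : H ≠ ⊤)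
    (h20 : ((2, 0) : ℤ × ℤ) ∈ H) (h01 : ((0, 1) : ℤ × ℤ) ∈ H) : H = latU := by
  ext ⟨u, v⟩
  show _ ↔ 2 ∣ u
  constructor
  · intro hp
    by_contra hu
    obtain ⟨k, hk⟩ : ∃ k, u = 2 * k + 1 := ⟨(u - 1) / 2, by omega⟩
    have h1 : ((1, 0) : ℤ × ℤ) = (u, v) - k • ((2, 0) : ℤ × ℤ) - v • ((0, 1) : ℤ × ℤ) := by
      simp [Prod.ext_iff]; omega
    have : ((1, 0) : ℤ × ℤ) ∈ H := by
      rw [h1]; exact H.sub_mem (H.sub_mem hp (H.zsmul_mem h20 k)) (H.zsmul_mem h01 v)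
    exact hH (aux_top H this h01)
  · rintro ⟨k, hk⟩
    have h1 : ((u, v) : ℤ × ℤ) = k • ((2, 0) : ℤ × ℤ) + v • ((0, 1) : ℤ × ℤ) := by
      simp [Prod.ext_iff]; omega
    rw [h1]
    exact H.add_mem (H.zsmul_mem h20 k) (H.zsmul_mem h01 v)

lemma aux_latV (H : AddSubgroup (ℤ × ℤ)) (hH : H ≠ ⊤)
    (h02 : ((0, 2) : ℤ × ℤ) ∈ H) (h10 : ((1, 0) : ℤ × ℤ) ∈ H) : H = latV := by
  ext ⟨u, v⟩
  show _ ↔ 2 ∣ v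
  constructor
  · intro hp
    by_contra hv
    obtain ⟨k, hk⟩ : ∃ k, v = 2 * k + 1 := ⟨(v - 1) / 2, by omega⟩
    have h1 : ((0, 1) : ℤ × ℤ) = (u, v) - k • ((0, 2) : ℤ × ℤ) - u • ((1, 0) : ℤ × ℤ) := by
      simp [Prod.ext_iff]; omega
    have : ((0, 1) : ℤ × ℤ) ∈ H := by
      rw [h1]; exact H.sub_mem (H.sub_mem hp (H.zsmul_mem h02 k)) (H.zsmul_mem h10 u)
    exact hH (aux_top H h10 this)
  · rintro ⟨k, hk⟩
    have h1 : ((u, v) : ℤ × ℤ) = k • ((0, 2) : ℤ × ℤ) + u • ((1, 0) : ℤ × ℤ) := by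
      simp [Prod.ext_iff]; omega
    rw [h1]
    exact H.add_mem (H.zsmul_mem h02 k) (H.zsmul_mem h10 u)

lemma aux_latS (H : AddSubgroup (ℤ × ℤ)) (hH : H ≠ ⊤)
    (h20 : ((2, 0) : ℤ × ℤ) ∈ H) (h11 : ((1, 1) : ℤ × ℤ) ∈ H) : H = latS := by
  ext ⟨u, v⟩
  show _ ↔ 2 ∣ u + v
  constructor
  · intro hp
    by_contra hv
    obtain ⟨k, hk⟩ : ∃ k, u + v = 2 * k + 1 := ⟨(u + v - 1) / 2, by omega⟩
    have h1 : ((1, 0) : ℤ × ℤ) = (u, v) - v • ((1, 1) : ℤ × ℤ) - (k - v) • ((2, 0) : ℤ × ℤ) := by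
      simp [Prod.ext_iff]; omega
    have h10 : ((1, 0) : ℤ × ℤ) ∈ H := by
      rw [h1]; exact H.sub_mem (H.sub_mem hp (H.zsmul_mem h11 v)) (H.zsmul_mem h20 (k - v))
    have h01 : ((0, 1) : ℤ × ℤ) ∈ H := by
      have : ((0, 1) : ℤ × ℤ) = (1, 1) - (1, 0) := by simp [Prod.ext_iff]
      rw [this]; exact H.sub_mem h11 h10
    exact hH (aux_top H h10 h01)
  · rintro ⟨k, hk⟩
    have h1 : ((u, v) : ℤ × ℤ) = v • ((1, 1) : ℤ × ℤ) + (k - v) • ((2, 0) : ℤ × ℤ) := by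
      simp [Prod.ext_iff]; omega
    rw [h1]
    exact H.add_mem (H.zsmul_mem h11 v) (H.zsmul_mem h20 (k - v))

/-- Three proper finite-index sublattices of `ℤ²` covering `ℤ²` are, up to
permutation, the three index-two sublattices. -/
theorem stmt_1 (Λ : Fin 3 → AddSubgroup (ℤ × ℤ))
    (hproper : ∀ i, Λ i ≠ ⊤)
    (hindex : ∀ i, (Λ i).index ≠ 0)
    (hcover : (↑(Λ 0) : Set (ℤ × ℤ)) ∪ ↑(Λ 1) ∪ ↑(Λ 2) = Set.univ) :
    ∃ e : Equiv.Perm (Fin 3), Λ (e 0) = latU ∧ Λ (e 1) = latV ∧ Λ (e 2) = latS := by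
  have hcov : ∀ x : ℤ × ℤ, x ∈ Λ 0 ∨ x ∈ Λ 1 ∨ x ∈ Λ 2 := by
    intro x
    have hx : x ∈ (↑(Λ 0) : Set (ℤ × ℤ)) ∪ ↑(Λ 1) ∪ ↑(Λ 2) := hcover ▸ Set.mem_univ x
    simpa [Set.mem_union, or_assoc] using hx
  have htw := aux_twice (Λ 0) (Λ 1) (Λ 2) hcov (hproper 0) (hproper 1) (hproper 2)
  have htw' : ∀ (i : Fin 3) (g : ℤ × ℤ), g + g ∈ Λ i := by
    intro i g
    fin_cases i
    · exact (htw g).1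
    · exact (htw g).2.1
    · exact (htw g).2.2
  have h20 : ∀ i : Fin 3, ((2, 0) : ℤ × ℤ) ∈ Λ i := fun i => by
    have := htw' i (1, 0); simpa using this
  have h02 : ∀ i : Fin 3, ((0, 2) : ℤ × ℤ) ∈ Λ i := fun i => by
    have := htw' i (0, 1); simpa using this
  -- indices containing the three odd classes
  obtain ⟨j, hj⟩ : ∃ j, ((0, 1) : ℤ × ℤ) ∈ Λ j := by
    rcases hcov (0, 1) with h | h | h
    exacts [⟨0, h⟩, ⟨1, h⟩, ⟨2, h⟩]
  obtain ⟨i, hi⟩ : ∃ i, ((1, 0) : ℤ × ℤ) ∈ Λ i := by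
    rcases hcov (1, 0) with h | h | h
    exacts [⟨0, h⟩, ⟨1, h⟩, ⟨2, h⟩]
  obtain ⟨k, hk⟩ : ∃ k, ((1, 1) : ℤ × ℤ) ∈ Λ k := by
    rcases hcov (1, 1) with h | h | h
    exacts [⟨0, h⟩, ⟨1, h⟩, ⟨2, h⟩]
  have hEU : Λ j = latU := aux_latU _ (hproper j) (h20 j) hj
  have hEV : Λ i = latV := aux_latV _ (hproper i) (h02 i) hi
  have hES : Λ k = latS := aux_latS _ (hproper k) (h20 k) hk
  have hij : j ≠ i := by
    intro h; subst h
    exact hproper j (aux_top _ hi hj)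
  have hjk : j ≠ k := by
    intro h; subst h
    have h10 : ((1, 0) : ℤ × ℤ) ∈ Λ j := by
      have : ((1, 0) : ℤ × ℤ) = (1, 1) - (0, 1) := by simp [Prod.ext_iff]
      rw [this]; exact (Λ j).sub_mem hk hj
    exact hproper j (aux_top _ h10 hj)
  have hik : i ≠ k := by
    intro h; subst h
    have h01 : ((0, 1) : ℤ × ℤ) ∈ Λ i := by
      have : ((0, 1) : ℤ × ℤ) = (1, 1) - (1, 0) := by simp [Prod.ext_iff]
      rw [this]; exact (Λ i).sub_mem hk hi
    exact hproper i (aux_top _ hi h01)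
  have hinj : Function.Injective (![j, i, k] : Fin 3 → Fin 3) := by
    intro x y hxy
    fin_cases x <;> fin_cases y <;> simp_all [Matrix.cons_val_zero, Matrix.cons_val_one]
  refine ⟨Equiv.ofBijective _ (Finite.injective_iff_bijective.mp hinj), ?_, ?_, ?_⟩
  · simpa using hEU
  · simpa using hEV
  · simpa using hES
end

section
/- Let f(X) ∈ ℤ[X] be a primitive polynomial of degree k ≥ 0 (i.e. the gcd of its coefficients is 1). Then the gcd of the set of values {f(a) : a ∈ ℤ} divides k!. -/
open Polynomial

private lemma taylor_coeff_of_natDegree_le (f : Polynomial ℤ) (j : ℕ) (hj : f.natDegree ≤ j) :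
    (taylor 1 f).coeff j = f.coeff j := by
  rw [taylor_coeff]
  have h0 : (hasseDeriv j f).natDegree ≤ 0 := by
    refine le_trans (natDegree_hasseDeriv_le f j) ?_
    omega
  rw [Polynomial.eq_C_of_natDegree_le_zero h0, eval_C, hasseDeriv_coeff]
  simp

private lemma fact_dvd_descPochhammer_eval (k : ℕ) (a : ℤ) :
    (Nat.factorial k : ℤ) ∣ (descPochhammer ℤ k).eval a := by
  rw [Polynomial.eval_eq_smeval, Ring.descPochhammer_eq_factorial_smul_choose]
  exact ⟨Ring.choose a k, by simp [nsmul_eq_mul]⟩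

private lemma key : ∀ n : ℕ, ∀ f : Polynomial ℤ, f.natDegree ≤ n → ∀ m : ℤ,
    (∀ a : ℤ, m ∣ f.eval a) → ∀ j : ℕ, m ∣ (Nat.factorial n : ℤ) * f.coeff j := by
  intro n
  induction n with
  | zero =>
    intro f hdeg m hm j
    rw [Polynomial.eq_C_of_natDegree_le_zero hdeg, coeff_C]
    have := hm 0
    rw [Polynomial.eq_C_of_natDegree_le_zero hdeg, eval_C] at this
    split <;> simp [this]
  | succ n ih =>
    intro f hdeg m hm j
    set c : ℤ := f.coeff (n + 1) with hc
    -- finite difference g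
    set g : Polynomial ℤ := taylor 1 f - f with hg
    have hgdeg : g.natDegree ≤ n := by
      rw [Polynomial.natDegree_le_iff_coeff_eq_zero]
      intro k hk
      have hk' : f.natDegree ≤ k := by omega
      rw [hg, coeff_sub, taylor_coeff_of_natDegree_le f k hk', sub_self]
    have hgval : ∀ a : ℤ, m ∣ g.eval a := by
      intro a
      rw [hg, eval_sub, taylor_eval]
      exact dvd_sub (hm (a + 1)) (hm a)
    -- leading coefficient divisibility: m ∣ (n+1)! * c
    have hgn : g.coeff n = (n + 1 : ℤ) * c := by
      have hdd : (hasseDeriv n f).natDegree ≤ 1 := by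
        refine le_trans (natDegree_hasseDeriv_le f n) ?_
        omega
      have := Polynomial.eq_X_add_C_of_natDegree_le_one hdd
      rw [hg, coeff_sub, taylor_coeff, this]
      simp only [eval_add, eval_mul, eval_C, eval_X, mul_one, hasseDeriv_coeff]
      rw [add_comm 1 n, Nat.choose_succ_self_right, Nat.zero_add, Nat.choose_self]
      push_cast
      ring
    have hlead : m ∣ (Nat.factorial (n + 1) : ℤ) * c := by
      have := ih g hgdeg m hgval n
      rw [hgn] at this
      have h2 : (Nat.factorial (n + 1) : ℤ) * c
          = (Nat.factorial n : ℤ) * ((n + 1 : ℤ) * c) := by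
        rw [Nat.factorial_succ]; push_cast; ring
      rw [h2]
      exact this
    -- subtract c * descPochhammer (n+1)
    set p : Polynomial ℤ := descPochhammer ℤ (n + 1) with hp
    have hpdeg : p.natDegree = n + 1 := descPochhammer_natDegree ℤ (n + 1)
    have hpmonic : p.Monic := monic_descPochhammer ℤ (n + 1)
    set f₂ : Polynomial ℤ := f - C c * p with hf₂
    have hf₂deg : f₂.natDegree ≤ n := by
      rw [Polynomial.natDegree_le_iff_coeff_eq_zero]
      intro k hk
      rw [hf₂, coeff_sub, coeff_C_mul]
      rcases eq_or_lt_of_le (show n + 1 ≤ k by omega) with h | h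
      · have h1 : p.coeff (n + 1) = 1 := by
          have := hpmonic.coeff_natDegree
          rwa [hpdeg] at this
        rw [← h, h1, mul_one, hc, sub_self]
      · rw [Polynomial.coeff_eq_zero_of_natDegree_lt (by omega),
          Polynomial.coeff_eq_zero_of_natDegree_lt (by omega : p.natDegree < k)]
        ring
    have hf₂val : ∀ a : ℤ, m ∣ f₂.eval a := by
      intro a
      rw [hf₂, eval_sub, eval_mul, eval_C]
      refine dvd_sub (hm a) ?_
      obtain ⟨t, ht⟩ := fact_dvd_descPochhammer_eval (n + 1) a
      rw [ht]
      obtain ⟨s, hs⟩ := hlead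
      exact ⟨s * t, by rw [← mul_assoc, mul_comm c, hs]; ring⟩
    -- conclude
    have hih := ih f₂ hf₂deg m hf₂val j
    rw [hf₂, coeff_sub, coeff_C_mul, mul_sub] at hih
    have hterm : m ∣ (Nat.factorial (n + 1) : ℤ) * (c * p.coeff j) :=
      mul_assoc (Nat.factorial (n + 1) : ℤ) c (p.coeff j) ▸ hlead.mul_right (p.coeff j)
    have hmul : m ∣ (n + 1 : ℤ) * ((Nat.factorial n : ℤ) * f.coeff j
        - (Nat.factorial n : ℤ) * (c * p.coeff j)) := hih.mul_left _
    have hfact : (Nat.factorial (n + 1) : ℤ) = (n + 1 : ℤ) * (Nat.factorial n : ℤ) := by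
      rw [Nat.factorial_succ]; push_cast; ring
    have : (Nat.factorial (n + 1) : ℤ) * f.coeff j
        = (n + 1 : ℤ) * ((Nat.factorial n : ℤ) * f.coeff j
          - (Nat.factorial n : ℤ) * (c * p.coeff j))
          + (Nat.factorial (n + 1) : ℤ) * (c * p.coeff j) := by
      rw [hfact]; ring
    rw [this]
    exact dvd_add hmul hterm

/-- Pólya: if `f ∈ ℤ[X]` is primitive of degree `k`, then the gcd of the values
`f(a)`, `a ∈ ℤ`, divides `k!` (equivalently every common divisor of the values
divides `k!`). -/
theorem stmt_6 (f : Polynomial ℤ) (hf : f.IsPrimitive) (m : ℤ)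
    (hm : ∀ a : ℤ, m ∣ f.eval a) :
    m ∣ (Nat.factorial f.natDegree : ℤ) := by
  set k := f.natDegree
  have hkey : ∀ j, m ∣ (Nat.factorial k : ℤ) * f.coeff j :=
    key k f le_rfl m hm
  have hCdvd : C m ∣ C (Nat.factorial k : ℤ) * f := by
    rw [Polynomial.C_dvd_iff_dvd_coeff]
    intro j
    rw [coeff_C_mul]
    exact hkey j
  have := Polynomial.dvd_content_iff_C_dvd.mpr hCdvd
  rwa [Polynomial.content_C_mul, hf.content_eq_one, mul_one,
    Int.normalize_of_nonneg (by positivity)] at this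
end

section
/- Let d ≥ 1 and let H(X,Y) ∈ ℤ[X,Y] be a primitive binary form of degree d with nonzero discriminant. Suppose there exist positive integers D, N, ν with gcd(D,N) = 1 such that D^d · H(ℤ²) = N^d · {H(x, νy) : (x,y) ∈ ℤ²} as sets of integers. Then N = 1 and D divides ν. -/
open MvPolynomial

section Aux

/-- `k!` divides the descending Pochhammer polynomial evaluated at any integer. -/
lemma desc_dvd (k : ℕ) (n : ℤ) : (k.factorial : ℤ) ∣ (descPochhammer ℤ k).eval n := by
  have h := Ring.descPochhammer_eq_factorial_smul_choose (R := ℤ) n k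
  rw [← Polynomial.eval_eq_smeval] at h
  exact ⟨Ring.choose n k, by rw [h, nsmul_eq_mul]⟩

/-- Pólya-type lemma: if `m` divides all values of `f` on `ℤ`, then `m` divides
`k! * (each coefficient)` for any `k ≥ deg f`. -/
lemma polya_aux (m : ℤ) : ∀ k : ℕ, ∀ f : Polynomial ℤ, f.natDegree ≤ k →
    (∀ n : ℤ, m ∣ f.eval n) → ∀ j, m ∣ (k.factorial : ℤ) * f.coeff j := by
  intro k
  induction k with
  | zero =>
    intro f hdeg hval j
    have hf : f = Polynomial.C (f.coeff 0) := Polynomial.eq_C_of_natDegree_le_zero hdeg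
    have h0 := hval 0
    rw [hf, Polynomial.eval_C] at h0
    rcases Nat.eq_zero_or_pos j with rfl | hj
    · simpa using h0
    · rw [hf, Polynomial.coeff_C, if_neg hj.ne']
      simp
  | succ k ih =>
    intro f hdeg hval j
    set c : ℤ := f.coeff (k + 1) with hc
    -- the forward difference
    set Δ : Polynomial ℤ := Polynomial.taylor 1 f - f with hΔ
    have hΔval : ∀ n : ℤ, m ∣ Δ.eval n := by
      intro n
      have hev : Δ.eval n = f.eval (n + 1) - f.eval n := by
        simp [hΔ, Polynomial.taylor_eval]
      rw [hev]
      exact dvd_sub (hval (n + 1)) (hval n)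
    have hH1 : Polynomial.hasseDeriv (k + 1) f = Polynomial.C c := by
      ext n
      rw [Polynomial.hasseDeriv_coeff, Polynomial.coeff_C]
      rcases Nat.eq_zero_or_pos n with rfl | hn
      · simp [hc]
      · rw [if_neg hn.ne']
        have hz : f.coeff (n + (k + 1)) = 0 :=
          Polynomial.coeff_eq_zero_of_natDegree_lt (lt_of_le_of_lt hdeg (by omega))
        simp [hz]
    have hHbig : ∀ i, k + 1 < i → Polynomial.hasseDeriv i f = 0 := by
      intro i hi
      ext n
      rw [Polynomial.hasseDeriv_coeff]
      have hz : f.coeff (n + i) = 0 :=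
        Polynomial.coeff_eq_zero_of_natDegree_lt (lt_of_le_of_lt hdeg (by omega))
      simp [hz]
    have hHk : Polynomial.hasseDeriv k f
        = Polynomial.C (f.coeff k) + Polynomial.C ((k + 1 : ℤ) * c) * Polynomial.X := by
      ext n
      rw [Polynomial.hasseDeriv_coeff]
      match n with
      | 0 => simp
      | 1 =>
        have h1 : (1 + k).choose k = k + 1 := by
          rw [add_comm 1 k]; exact Nat.choose_succ_self_right k
        have h2 : (1:ℕ) + k = k + 1 := by omega
        rw [h1, h2, Polynomial.coeff_add, Polynomial.coeff_C, Polynomial.coeff_C_mul,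
          Polynomial.coeff_X_one, if_neg one_ne_zero, mul_one, zero_add, ← hc]
        push_cast
        ring
      | (n+2) =>
        have hz : f.coeff (n + 2 + k) = 0 :=
          Polynomial.coeff_eq_zero_of_natDegree_lt (lt_of_le_of_lt hdeg (by omega))
        rw [hz, Polynomial.coeff_add, Polynomial.coeff_C, Polynomial.coeff_C_mul,
          Polynomial.coeff_X]
        simp
    have hΔtop : ∀ i, k < i → Δ.coeff i = 0 := by
      intro i hi
      rcases eq_or_lt_of_le (Nat.succ_le_of_lt hi) with h | h
      · have : Δ.coeff (k+1) = 0 := by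
          simp only [hΔ, Polynomial.coeff_sub, Polynomial.taylor_coeff, hH1,
            Polynomial.eval_C, hc]
          ring
        rwa [← h]
      · simp only [hΔ, Polynomial.coeff_sub, Polynomial.taylor_coeff, hHbig i (by omega)]
        have hz : f.coeff i = 0 :=
          Polynomial.coeff_eq_zero_of_natDegree_lt (lt_of_le_of_lt hdeg (by omega))
        simp [hz]
    have hΔdeg : Δ.natDegree ≤ k := Polynomial.natDegree_le_iff_coeff_eq_zero.mpr hΔtop
    have hΔk : Δ.coeff k = (k + 1 : ℤ) * c := by
      simp only [hΔ, Polynomial.coeff_sub, Polynomial.taylor_coeff, hHk]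
      simp
    have h1 : m ∣ (k.factorial : ℤ) * ((k + 1 : ℤ) * c) := hΔk ▸ ih Δ hΔdeg hΔval k
    have h1' : m ∣ ((k+1).factorial : ℤ) * c := by
      have heq : (((k+1).factorial : ℤ)) * c = (k.factorial : ℤ) * ((k + 1 : ℤ) * c) := by
        rw [Nat.factorial_succ]; push_cast; ring
      rw [heq]; exact h1
    -- subtract the top part
    set g : Polynomial ℤ := f - Polynomial.C c * descPochhammer ℤ (k+1) with hg
    have hdescdeg : (descPochhammer ℤ (k+1)).natDegree = k + 1 := descPochhammer_natDegree ℤ (k+1)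
    have hdescmonic : (descPochhammer ℤ (k+1)).Monic := monic_descPochhammer ℤ (k+1)
    have hgtop : ∀ i, k < i → g.coeff i = 0 := by
      intro i hi
      rcases eq_or_lt_of_le (Nat.succ_le_of_lt hi) with h | h
      · have hlead : (descPochhammer ℤ (k+1)).coeff (k+1) = 1 := by
          have := hdescmonic.coeff_natDegree
          rwa [hdescdeg] at this
        rw [← h]
        simp [hg, Polynomial.coeff_C_mul, hlead, hc]
      · have hz1 : f.coeff i = 0 :=
          Polynomial.coeff_eq_zero_of_natDegree_lt (lt_of_le_of_lt hdeg (by omega))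
        have hz2 : (descPochhammer ℤ (k+1)).coeff i = 0 :=
          Polynomial.coeff_eq_zero_of_natDegree_lt (by rw [hdescdeg]; omega)
        simp [hg, Polynomial.coeff_C_mul, hz1, hz2]
    have hgdeg : g.natDegree ≤ k := Polynomial.natDegree_le_iff_coeff_eq_zero.mpr hgtop
    have hgval : ∀ n : ℤ, m ∣ g.eval n := by
      intro n
      have hev : g.eval n = f.eval n - c * (descPochhammer ℤ (k+1)).eval n := by
        simp [hg]
      rw [hev]
      refine dvd_sub (hval n) ?_
      obtain ⟨t, ht⟩ := desc_dvd (k+1) n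
      have : c * (descPochhammer ℤ (k+1)).eval n = (((k+1).factorial : ℤ) * c) * t := by
        rw [ht]; ring
      rw [this]
      exact h1'.mul_right t
    have h2 : m ∣ (k.factorial : ℤ) * g.coeff j := ih g hgdeg hgval j
    have hcoeff : f.coeff j = g.coeff j + c * (descPochhammer ℤ (k+1)).coeff j := by
      simp [hg, Polynomial.coeff_C_mul]
    have hfinal : ((k+1).factorial : ℤ) * f.coeff j
        = (k + 1 : ℤ) * ((k.factorial : ℤ) * g.coeff j)
          + (((k+1).factorial : ℤ) * c) * (descPochhammer ℤ (k+1)).coeff j := by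
      rw [hcoeff, Nat.factorial_succ]; push_cast; ring
    rw [hfinal]
    exact dvd_add (h2.mul_left _) (h1'.mul_right _)

/-- Evaluating an `aeval` into `ℤ[X]` at a point. -/
lemma eval_aeval (H : MvPolynomial (Fin 2) ℤ) (g : Fin 2 → Polynomial ℤ) (x : ℤ) :
    (MvPolynomial.aeval g H).eval x = MvPolynomial.eval (fun i => (g i).eval x) H := by
  induction H using MvPolynomial.induction_on with
  | C a => simp
  | add p q hp hq => simp [hp, hq]
  | mul_X p i h => simp [h]

lemma support_deg {d : ℕ} {H : MvPolynomial (Fin 2) ℤ} (hhom : H.IsHomogeneous d)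
    {mo : Fin 2 →₀ ℕ} (hmo : mo ∈ H.support) : mo 0 + mo 1 = d := by
  have h := hhom (MvPolynomial.mem_support_iff.mp hmo)
  change (Finsupp.weight (fun _ => 1)) mo = d at h
  rw [← Finsupp.degree_eq_weight_one] at h
  rw [← h]
  rw [Finsupp.degree_apply]
  rw [Finset.sum_subset (Finset.subset_univ mo.support)
    (fun i _ hi => Finsupp.notMem_support_iff.mp hi)]
  rw [Fin.sum_univ_two]

lemma coeff_aeval {H : MvPolynomial (Fin 2) ℤ} (c : ℤ) (j : ℕ) :
    (MvPolynomial.aeval ![Polynomial.X, Polynomial.C c] H).coeff j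
      = ∑ mo ∈ H.support, (H.coeff mo * c ^ (mo 1)) * (if j = mo 0 then 1 else 0) := by
  rw [MvPolynomial.aeval_def, MvPolynomial.eval₂_eq', Polynomial.finset_sum_coeff]
  refine Finset.sum_congr rfl ?_
  intro mo hmo
  have hterm : (algebraMap ℤ (Polynomial ℤ)) (H.coeff mo)
        * ∏ i : Fin 2, (![Polynomial.X, Polynomial.C c] i) ^ (mo i)
      = Polynomial.C (H.coeff mo * c ^ (mo 1)) * Polynomial.X ^ (mo 0) := by
    rw [Fin.prod_univ_two]
    simp only [Matrix.cons_val_zero, Matrix.cons_val_one, Matrix.head_cons,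
      ← Polynomial.C_pow, algebraMap_int_eq, eq_intCast]
    push_cast
    ring
  rw [hterm, Polynomial.coeff_C_mul, Polynomial.coeff_X_pow]

lemma fact_le {p d : ℕ} (hp : p.Prime) (hd : 1 ≤ d) :
    (d.factorial).factorization p ≤ d - 1 := by
  set v := (d.factorial).factorization p with hv
  have hdvd : p ^ v ∣ d.factorial := Nat.ordProj_dvd _ _
  by_cases hp2 : p = 2
  · subst hp2
    have hlt := Nat.emultiplicity_two_factorial_lt (n := d) (by omega)
    have h1 : (v : ℕ∞) ≤ emultiplicity 2 d.factorial :=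
      pow_dvd_iff_le_emultiplicity.mp hdvd
    have h2 : (v : ℕ∞) < (d : ℕ∞) := lt_of_le_of_lt h1 hlt
    have h3 : v < d := by exact_mod_cast h2
    omega
  · have hge : 3 ≤ p := by have := hp.two_le; omega
    have hb : Nat.log p d < Nat.log p d + 1 := Nat.lt_succ_self _
    have h1 : v ≤ ∑ i ∈ Finset.Ico 1 (Nat.log p d + 1), d / p ^ i :=
      (Nat.Prime.pow_dvd_factorial_iff hp hb).mp hdvd
    have h2 : ∑ i ∈ Finset.Ico 1 (Nat.log p d + 1), d / p ^ i ≤ d / (p - 1) :=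
      Nat.geom_sum_Ico_le hp.two_le _ _
    have h3 : d / (p - 1) ≤ d / 2 := Nat.div_le_div_left (by omega) (by omega)
    have h4 : d / 2 < d := Nat.div_lt_self (by omega) (by omega)
    omega

/-- Key lemma: if `p^K` divides all values `H(x, p^e)`, then `K ≤ (d-1) + e·d`. -/
lemma key_s8 (d : ℕ) (hd : 1 ≤ d) (H : MvPolynomial (Fin 2) ℤ)
    (hhom : H.IsHomogeneous d)
    (hprim : ∀ c : ℤ, (∀ m, c ∣ H.coeff m) → IsUnit c)
    (p : ℕ) (hp : p.Prime) (e K : ℕ)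
    (hdvd : ∀ x : ℤ, (p:ℤ)^K ∣ MvPolynomial.eval ![x, (p:ℤ)^e] H) :
    K ≤ (d - 1) + e * d := by
  have hpint : Prime (p : ℤ) := Nat.prime_iff_prime_int.mp hp
  have hex : ∃ mo, ¬ (p:ℤ) ∣ H.coeff mo := by
    by_contra hall
    push_neg at hall
    have hu := hprim (p:ℤ) hall
    rw [Int.isUnit_iff] at hu
    have h2 : (2:ℤ) ≤ (p:ℤ) := by exact_mod_cast hp.two_le
    rcases hu with h | h <;> omega
  obtain ⟨mo, hmo⟩ := hex
  have hmosup : mo ∈ H.support :=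
    MvPolynomial.mem_support_iff.mpr (fun h => hmo (h ▸ dvd_zero _))
  have hsum : mo 0 + mo 1 = d := support_deg hhom hmosup
  set f : Polynomial ℤ := MvPolynomial.aeval ![Polynomial.X, Polynomial.C ((p:ℤ)^e)] H with hf
  have hfdeg : f.natDegree ≤ d := by
    rw [Polynomial.natDegree_le_iff_coeff_eq_zero]
    intro M hM
    rw [hf, coeff_aeval]
    apply Finset.sum_eq_zero
    intro m hm
    have hmd : m 0 + m 1 = d := support_deg hhom hm
    rw [if_neg (by omega), mul_zero]
  have hfval : ∀ n : ℤ, (p:ℤ)^K ∣ f.eval n := by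
    intro n
    rw [hf, eval_aeval]
    have hfn : (fun i => (![Polynomial.X, Polynomial.C ((p:ℤ)^e)] i).eval n)
        = ![n, (p:ℤ)^e] := by
      funext i; fin_cases i <;> simp
    rw [hfn]
    exact hdvd n
  have hcoeff : f.coeff (mo 0) = H.coeff mo * ((p:ℤ)^e) ^ (mo 1) := by
    rw [hf, coeff_aeval]
    rw [Finset.sum_eq_single mo]
    · simp
    · intro m hm hne
      by_cases h0 : mo 0 = m 0
      · exfalso
        apply hne
        have hmd : m 0 + m 1 = d := support_deg hhom hm
        have h1 : m 1 = mo 1 := by omega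
        ext i
        fin_cases i
        · exact h0.symm
        · exact h1
      · rw [if_neg h0, mul_zero]
    · intro h; exact absurd hmosup h
  have h1 : (p:ℤ)^K ∣ (d.factorial : ℤ) * f.coeff (mo 0) :=
    polya_aux _ d f hfdeg hfval (mo 0)
  rw [hcoeff, ← pow_mul] at h1
  have hcop : IsCoprime ((p:ℤ)^K) (H.coeff mo) :=
    IsCoprime.pow_left ((hpint.coprime_iff_not_dvd).mpr hmo)
  have h2 : (p:ℤ)^K ∣ (d.factorial : ℤ) * (p:ℤ)^(e * mo 1) := by
    apply hcop.dvd_of_dvd_mul_right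
    have : (d.factorial : ℤ) * (p:ℤ)^(e * mo 1) * H.coeff mo
        = (d.factorial : ℤ) * (H.coeff mo * (p:ℤ)^(e * mo 1)) := by ring
    rw [this]
    exact h1
  have h3 : (p:ℤ)^K ∣ (d.factorial : ℤ) * (p:ℤ)^(e * d) := by
    refine h2.trans (mul_dvd_mul_left _ (pow_dvd_pow _ ?_))
    exact Nat.mul_le_mul_left e (by omega)
  have h4 : p^K ∣ d.factorial * p^(e*d) := by
    have hcast : ((d.factorial * p^(e*d) : ℕ) : ℤ) = (d.factorial : ℤ) * (p:ℤ)^(e*d) := by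
      push_cast; ring
    rw [← Int.natCast_dvd_natCast, hcast]
    push_cast
    exact h3
  have hne : d.factorial * p^(e*d) ≠ 0 :=
    Nat.mul_ne_zero (Nat.factorial_ne_zero d) (pow_ne_zero _ hp.pos.ne')
  have h5 : K ≤ (d.factorial * p^(e*d)).factorization p :=
    (Nat.Prime.pow_dvd_iff_le_factorization hp hne).mp h4
  rw [Nat.factorization_mul (Nat.factorial_ne_zero d) (pow_ne_zero _ hp.pos.ne'),
    Nat.Prime.factorization_pow hp] at h5
  simp only [Finsupp.coe_add, Pi.add_apply, Finsupp.single_eq_same] at h5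
  have h6 := fact_le hp hd
  omega

end Aux

/-- If `H` is a primitive binary form of degree `d ≥ 1` with nonzero discriminant
(squarefree over `ℚ`) and `D^d · H(ℤ²) = N^d · {H(x, νy)}` with `gcd(D,N) = 1`,
then `N = 1` and `D ∣ ν`. -/
theorem stmt_8 (d : ℕ) (hd : 1 ≤ d) (H : MvPolynomial (Fin 2) ℤ)
    (hhom : H.IsHomogeneous d)
    (hprim : ∀ c : ℤ, (∀ m, c ∣ H.coeff m) → IsUnit c)
    (hdisc : Squarefree (MvPolynomial.map (Int.castRingHom ℚ) H))
    (D N ν : ℕ) (hD : 0 < D) (hN : 0 < N) (hν : 0 < ν)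
    (hDN : Nat.Coprime D N)
    (hval : {z : ℤ | ∃ x y : ℤ, z = (D : ℤ) ^ d * eval ![x, y] H}
          = {z : ℤ | ∃ x y : ℤ, z = (N : ℤ) ^ d * eval ![x, (ν : ℤ) * y] H}) :
    N = 1 ∧ D ∣ ν := by
  have hNd : ∀ x y : ℤ, ∃ x' y' : ℤ,
      (D:ℤ)^d * eval ![x,y] H = (N:ℤ)^d * eval ![x', (ν:ℤ)*y'] H := by
    intro x y
    have hmem : ((D:ℤ)^d * eval ![x,y] H)
        ∈ {z : ℤ | ∃ x y : ℤ, z = (D : ℤ) ^ d * eval ![x, y] H} := ⟨x, y, rfl⟩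
    rw [hval] at hmem
    exact hmem
  have hN1 : N = 1 := by
    by_contra h1
    obtain ⟨p, pp, hpN⟩ := Nat.exists_prime_and_dvd h1
    have hpint : Prime (p : ℤ) := Nat.prime_iff_prime_int.mp pp
    have hpD : ¬ (p ∣ D) := by
      intro hc
      have hg : p ∣ Nat.gcd D N := Nat.dvd_gcd hc hpN
      rw [hDN] at hg
      exact pp.ne_one (Nat.dvd_one.mp hg)
    have hppow : ∀ x y : ℤ, (p:ℤ)^d ∣ eval ![x,y] H := by
      intro x y
      obtain ⟨x', y', h⟩ := hNd x y
      have hdvdz : (p:ℤ)^d ∣ (D:ℤ)^d * eval ![x,y] H := by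
        rw [h]
        exact Dvd.dvd.mul_right (pow_dvd_pow_of_dvd (Int.natCast_dvd_natCast.mpr hpN) d) _
      have hcop : IsCoprime ((p:ℤ)^d) ((D:ℤ)^d) := by
        refine IsCoprime.pow ?_
        exact (hpint.coprime_iff_not_dvd).mpr (fun hc => hpD (Int.natCast_dvd_natCast.mp hc))
      exact hcop.dvd_of_dvd_mul_left hdvdz
    have hkey := key_s8 d hd H hhom hprim p pp 0 d (fun x => by simpa using hppow x 1)
    omega
  refine ⟨hN1, ?_⟩
  subst hN1
  have hDd : ∀ x y : ℤ, (D:ℤ)^d ∣ eval ![x, (ν:ℤ)*y] H := by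
    intro x y
    have hmem : ((1:ℕ):ℤ)^d * eval ![x,(ν:ℤ)*y] H
        ∈ {z : ℤ | ∃ x y : ℤ, z = ((1:ℕ) : ℤ) ^ d * eval ![x, (ν : ℤ) * y] H} := ⟨x, y, rfl⟩
    rw [← hval] at hmem
    obtain ⟨x', y', h⟩ := hmem
    refine ⟨eval ![x',y'] H, ?_⟩
    have h' : eval ![x,(ν:ℤ)*y] H = (D:ℤ)^d * eval ![x',y'] H := by
      simpa using h
    exact h'
  rw [← Nat.factorization_le_iff_dvd hD.ne' hν.ne', Finsupp.le_def]
  intro p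
  by_cases hpp : p.Prime
  swap
  · simp [Nat.factorization_eq_zero_of_not_prime _ hpp]
  by_cases hpD : p ∣ D
  swap
  · simp [Nat.factorization_eq_zero_of_not_dvd hpD]
  have hpint : Prime (p : ℤ) := Nat.prime_iff_prime_int.mp hpp
  set v := D.factorization p with hv
  set e := ν.factorization p with he
  have hv1 : 1 ≤ v := hpp.factorization_pos_of_dvd hD.ne' hpD
  by_contra hcon
  push_neg at hcon
  -- hcon : e < v
  set u := ν / p ^ e with hu
  have hνeq : p ^ e * u = ν := Nat.ordProj_mul_ordCompl_eq_self ν p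
  have hpu : ¬ p ∣ u := Nat.not_dvd_ordCompl hpp hν.ne'
  have hcopu : IsCoprime ((u:ℤ)) ((p:ℤ)^(d*v)) := by
    refine IsCoprime.pow_right ?_
    exact ((hpint.coprime_iff_not_dvd).mpr
      (fun hc => hpu (Int.natCast_dvd_natCast.mp hc))).symm
  obtain ⟨a, b, hab⟩ := hcopu
  have hpvD : (p:ℤ)^v ∣ (D:ℤ) := by
    exact_mod_cast Int.natCast_dvd_natCast.mpr (Nat.ordProj_dvd D p)
  have hkeyhyp : ∀ x : ℤ, (p:ℤ)^(d*v) ∣ MvPolynomial.eval ![x, (p:ℤ)^e] H := by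
    intro x
    set q : Polynomial ℤ := MvPolynomial.aeval ![Polynomial.C x, Polynomial.X] H with hq
    have hq1 : q.eval ((ν:ℤ)*a) = eval ![x, (ν:ℤ)*a] H := by
      have hfun : (fun i => Polynomial.eval ((ν:ℤ)*a) (![Polynomial.C x, Polynomial.X] i))
          = ![x, (ν:ℤ)*a] := by
        funext i; fin_cases i <;> simp
      rw [hq, eval_aeval, hfun]
    have hq2 : q.eval ((p:ℤ)^e) = eval ![x, (p:ℤ)^e] H := by
      have hfun : (fun i => Polynomial.eval ((p:ℤ)^e) (![Polynomial.C x, Polynomial.X] i))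
          = ![x, (p:ℤ)^e] := by
        funext i; fin_cases i <;> simp
      rw [hq, eval_aeval, hfun]
    have hd1 : (p:ℤ)^(d*v) ∣ q.eval ((ν:ℤ)*a) := by
      rw [hq1, mul_comm d v, pow_mul]
      exact dvd_trans (pow_dvd_pow_of_dvd hpvD d) (hDd x a)
    have hdiff : (p:ℤ)^(d*v) ∣ q.eval ((ν:ℤ)*a) - q.eval ((p:ℤ)^e) := by
      refine dvd_trans ?_ (Polynomial.sub_dvd_eval_sub _ _ q)
      have hνint : (ν:ℤ) = (p:ℤ)^e * (u:ℤ) := by exact_mod_cast hνeq.symm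
      have heq : (ν:ℤ)*a - (p:ℤ)^e = -((p:ℤ)^e * b) * (p:ℤ)^(d*v) := by
        rw [hνint]
        linear_combination ((p:ℤ)^e) * hab
      rw [heq]
      exact Dvd.dvd.mul_left dvd_rfl _
    have hfin := dvd_sub hd1 hdiff
    rw [sub_sub_cancel, hq2] at hfin
    exact hfin
  have hbound := key_s8 d hd H hhom hprim p hpp e (d*v) hkeyhyp
  have hmul : e*d + d ≤ d*v := by
    calc e*d + d = (e+1)*d := by ring
    _ ≤ v*d := Nat.mul_le_mul_right d hcon
    _ = d*v := mul_comm v d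
  have hfin : e*d + d ≤ (d - 1) + e*d := le_trans hmul hbound
  rw [add_comm (d-1) (e*d)] at hfin
  have := Nat.add_le_add_iff_left.mp hfin
  omega
end

section
/- Let f ∈ GL(2,ℚ) with canonical form f = (N/D)·[[m₁,m₂],[m₃,m₄]], where N, D ≥ 1, gcd(N,D) = 1 and gcd(m₁,m₂,m₃,m₄) = 1. Let L(f) = {(u,v) ∈ ℤ² : f(u,v) ∈ ℤ²}. Then the index of L(f) in ℤ² equals D² / gcd(D, m₁m₄ - m₂m₃). -/
theorem gcd_mul_of_coprime {a b D : ℕ} (h : Nat.Coprime a b) :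
    Nat.gcd D (a * b) = Nat.gcd D a * Nat.gcd D b := by
  apply Nat.dvd_antisymm
  · have h1 : Nat.gcd D (a*b) ∣ Nat.gcd (Nat.gcd D (a*b)) a * Nat.gcd (Nat.gcd D (a*b)) b :=
      Nat.dvd_gcd_mul_gcd_iff_dvd_mul.mpr (Nat.gcd_dvd_right _ _)
    exact h1.trans (mul_dvd_mul
      (Nat.dvd_gcd ((Nat.gcd_dvd_left _ _).trans (Nat.gcd_dvd_left D (a*b))) (Nat.gcd_dvd_right _ _))
      (Nat.dvd_gcd ((Nat.gcd_dvd_left _ _).trans (Nat.gcd_dvd_left D (a*b))) (Nat.gcd_dvd_right _ _)))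
  · exact Nat.dvd_gcd
      ((h.gcd_both D D).mul_dvd_of_dvd_of_dvd (Nat.gcd_dvd_left _ _) (Nat.gcd_dvd_left _ _))
      (mul_dvd_mul (Nat.gcd_dvd_right _ _) (Nat.gcd_dvd_right _ _))



theorem dvd_mul_iff_div_gcd_dvd {D : ℕ} (hD : 0 < D) (a x : ℤ) :
    (D:ℤ) ∣ a * x ↔ ((D / Nat.gcd D a.natAbs : ℕ) : ℤ) ∣ x := by
  have hg : Int.gcd (D:ℤ) a = Nat.gcd D a.natAbs := by
    simp [Int.gcd]
  have hgpos : 0 < Int.gcd (D:ℤ) a := by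
    rw [hg]; exact Nat.gcd_pos_of_pos_left _ hD
  set g : ℤ := (Int.gcd (D:ℤ) a : ℤ) with hgdef
  have hgpos' : (0:ℤ) < g := by positivity
  have hgD : g ∣ (D:ℤ) := Int.gcd_dvd_left _ _
  have hga : g ∣ a := Int.gcd_dvd_right _ _
  have ha' : g * (a/g) = a := Int.mul_ediv_cancel' hga
  have hD' : g * ((D:ℤ)/g) = (D:ℤ) := Int.mul_ediv_cancel' hgD
  have hcast : ((D / Nat.gcd D a.natAbs : ℕ) : ℤ) = (D:ℤ) / g := by
    rw [hgdef, hg]; exact Int.natCast_div _ _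
  rw [hcast]
  have hcop : IsCoprime ((D:ℤ)/g) (a/g) := by
    rw [Int.isCoprime_iff_gcd_eq_one]
    exact Int.gcd_div_gcd_div_gcd hgpos
  constructor
  · intro h
    have h2 : (D:ℤ)/g * g ∣ (a/g) * x * g := by
      rw [Int.ediv_mul_cancel hgD, mul_assoc, mul_comm x g, ← mul_assoc, Int.ediv_mul_cancel hga]
      exact h
    have h3 : (D:ℤ)/g ∣ (a/g) * x := (mul_dvd_mul_iff_right hgpos'.ne').mp h2
    exact hcop.dvd_of_dvd_mul_left h3
  · rintro ⟨y, rfl⟩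
    refine ⟨(a/g) * y, ?_⟩
    calc a * ((D:ℤ)/g * y) = (g * (a/g)) * ((D:ℤ)/g * y) := by rw [ha']
      _ = (g * ((D:ℤ)/g)) * ((a/g) * y) := by ring
      _ = (D:ℤ) * ((a/g) * y) := by rw [hD']


def Ksub (D : ℕ) (A : Matrix (Fin 2) (Fin 2) ℤ) : AddSubgroup (Fin 2 → ℤ) where
  carrier := {v | ∀ i, (D:ℤ) ∣ A.mulVec v i}
  zero_mem' := by intro i; simp
  add_mem' := by
    intro v w hv hw i
    rw [Matrix.mulVec_add]
    exact dvd_add (hv i) (hw i)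
  neg_mem' := by
    intro v hv i
    rw [Matrix.mulVec_neg]
    exact (hv i).neg_right

lemma dvd_mulVec {D : ℕ} {w : Fin 2 → ℤ} (h : ∀ i, (D:ℤ) ∣ w i)
    (B : Matrix (Fin 2) (Fin 2) ℤ) : ∀ k, (D:ℤ) ∣ B.mulVec w k := by
  intro k
  rw [Matrix.mulVec]
  apply Finset.dvd_sum
  intro i _
  exact Dvd.dvd.mul_left (h i) _

lemma Ksub_unit_mul {D : ℕ} {U A : Matrix (Fin 2) (Fin 2) ℤ} (hU : IsUnit U.det) :
    Ksub D (U * A) = Ksub D A := by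
  ext v
  constructor
  · intro hv i
    have h1 : A.mulVec v = U⁻¹.mulVec ((U * A).mulVec v) := by
      rw [Matrix.mulVec_mulVec, ← Matrix.mul_assoc, Matrix.nonsing_inv_mul U hU, Matrix.one_mul]
    rw [h1]
    exact dvd_mulVec hv U⁻¹ i
  · intro hv i
    have h1 : (U * A).mulVec v = U.mulVec (A.mulVec v) := (Matrix.mulVec_mulVec _ _ _).symm
    rw [h1]
    exact dvd_mulVec hv U i

lemma Ksub_mul_unit {D : ℕ} {A C : Matrix (Fin 2) (Fin 2) ℤ} (hC : IsUnit C.det) :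
    (Ksub D (A * C)).index = (Ksub D A).index := by
  have hsurj : Function.Surjective (C.mulVecLin.toAddMonoidHom) := by
    intro v
    refine ⟨C⁻¹.mulVec v, ?_⟩
    show C.mulVec (C⁻¹.mulVec v) = v
    rw [Matrix.mulVec_mulVec, Matrix.mul_nonsing_inv C hC, Matrix.one_mulVec]
  have hcomap : Ksub D (A * C) = (Ksub D A).comap C.mulVecLin.toAddMonoidHom := by
    ext v
    show (∀ i, (D:ℤ) ∣ (A * C).mulVec v i) ↔ ∀ i, (D:ℤ) ∣ A.mulVec (C.mulVec v) i
    simp_rw [Matrix.mulVec_mulVec]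
  rw [hcomap]
  exact AddSubgroup.index_comap_of_surjective _ hsurj


def Hmul (D : ℕ) (a : ℤ) : AddSubgroup ℤ where
  carrier := {x | (D:ℤ) ∣ a * x}
  zero_mem' := by simp
  add_mem' := by
    intro x y hx hy
    simp only [Set.mem_setOf_eq, mul_add] at *
    exact dvd_add hx hy
  neg_mem' := by
    intro x hx
    simp only [Set.mem_setOf_eq, mul_neg] at *
    exact hx.neg_right



lemma Hmul_index {D : ℕ} (hD : 0 < D) (a : ℤ) :
    (Hmul D a).index = D / Nat.gcd D a.natAbs := by
  have h1 : Hmul D a = AddSubgroup.zmultiples ((D / Nat.gcd D a.natAbs : ℕ) : ℤ) := by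
    ext x
    rw [Int.mem_zmultiples_iff]
    exact dvd_mul_iff_div_gcd_dvd hD a x
  rw [h1, Int.index_zmultiples, Int.natAbs_natCast]

lemma Ksub_diagonal {D : ℕ} (a : Fin 2 → ℤ) :
    (Ksub D (Matrix.diagonal a)) = AddSubgroup.pi Set.univ (fun i => Hmul D (a i)) := by
  ext v
  show (∀ i, (D:ℤ) ∣ (Matrix.diagonal a).mulVec v i) ↔ _
  simp_rw [Matrix.mulVec_diagonal]
  constructor
  · intro h i _; exact h i
  · intro h i; exact h i (Set.mem_univ i)

lemma Ksub_diagonal_index {D : ℕ} (hD : 0 < D) (a : Fin 2 → ℤ) :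
    (Ksub D (Matrix.diagonal a)).index =
      (D / Nat.gcd D (a 0).natAbs) * (D / Nat.gcd D (a 1).natAbs) := by
  rw [Ksub_diagonal, AddSubgroup.index_pi]
  rw [Fin.prod_univ_two]
  rw [Hmul_index hD, Hmul_index hD]


lemma exists_snf (m : Matrix (Fin 2) (Fin 2) ℤ) (hdm : m.det ≠ 0) :
    ∃ (U C : Matrix (Fin 2) (Fin 2) ℤ) (a : Fin 2 → ℤ),
      IsUnit U.det ∧ IsUnit C.det ∧ m = U * Matrix.diagonal a * C := by
  classical
  set b : Module.Basis (Fin 2) ℤ (Fin 2 → ℤ) := Pi.basisFun ℤ (Fin 2) with hb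
  set N : Submodule ℤ (Fin 2 → ℤ) := LinearMap.range m.mulVecLin with hN
  obtain ⟨n, snf⟩ := N.smithNormalForm b
  have hinj : Function.Injective m.mulVecLin := by
    rw [← LinearMap.ker_eq_bot, LinearMap.ker_eq_bot']
    intro v hv
    by_contra hvne
    exact hdm (Matrix.exists_mulVec_eq_zero_iff.mp ⟨v, hvne, hv⟩)
  let e : (Fin 2 → ℤ) ≃ₗ[ℤ] N := LinearEquiv.ofInjective m.mulVecLin hinj
  have hn : n = 2 := by
    have b2 : Module.Basis (Fin n) ℤ (Fin 2 → ℤ) := snf.bN.map e.symm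
    have h1 : Module.finrank ℤ (Fin 2 → ℤ) = n := by
      rw [Module.finrank_eq_card_basis b2, Fintype.card_fin]
    rw [Module.finrank_pi, Fintype.card_fin] at h1
    omega
  subst hn
  -- the permutation
  let σ : Equiv.Perm (Fin 2) := Equiv.ofBijective snf.f
    ((Finite.injective_iff_bijective).mp snf.f.injective)
  have hσ : ∀ i, σ i = snf.f i := fun i => rfl
  -- basis of N given by columns of m
  let bcols : Module.Basis (Fin 2) ℤ N := b.map e
  have hbcols : ∀ j, (bcols j : Fin 2 → ℤ) = fun k => m k j := by
    intro j
    have h1 : (bcols j : Fin 2 → ℤ) = m.mulVecLin (b j) := by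
      show (↑((LinearEquiv.ofInjective m.mulVecLin hinj) (b j)) : Fin 2 → ℤ) = _
      rw [LinearEquiv.ofInjective_apply]
    rw [h1]
    funext k
    simp [hb, Matrix.mulVecLin, Matrix.mulVec, dotProduct, Pi.single_apply]
  let U0 : Matrix (Fin 2) (Fin 2) ℤ := b.toMatrix snf.bM
  let C : Matrix (Fin 2) (Fin 2) ℤ := snf.bN.toMatrix bcols
  have hU0 : ∀ k l, (snf.bM l) k = U0 k l := by
    intro k l
    simp [U0, Module.Basis.toMatrix_apply, hb]
  let P : Matrix (Fin 2) (Fin 2) ℤ := Matrix.of fun k i => if k = σ i then (1:ℤ) else 0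
  -- key identity
  have key : m = (U0 * P) * Matrix.diagonal snf.a * C := by
    have hE : ∀ k i, ((U0 * P) * Matrix.diagonal snf.a) k i = snf.a i * U0 k (snf.f i) := by
      intro k i
      rw [Matrix.mul_diagonal]
      have hUP : (U0 * P) k i = U0 k (σ i) := by
        rw [Matrix.mul_apply]
        rw [Finset.sum_eq_single (σ i)]
        · simp [P]
        · intro l _ hl; simp [P, hl]
        · simp
      rw [hUP, hσ, mul_comm]
    ext k j
    have hcol : (bcols j : Fin 2 → ℤ) = ∑ i, C i j • ((snf.bN i : N) : Fin 2 → ℤ) := by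
      have h3 := Module.Basis.sum_toMatrix_smul_self snf.bN bcols (j := j)
      rw [← h3]
      push_cast [Submodule.coe_sum]
      rfl
    have h2 : m k j = ∑ i, C i j * (snf.a i * (snf.bM (snf.f i)) k) := by
      have h4 := congrFun (hbcols j) k
      rw [congrFun hcol k] at h4
      rw [← h4]
      simp only [Finset.sum_apply, Pi.smul_apply, smul_eq_mul]
      congr 1
      funext i
      rw [snf.snf i]
      simp
    rw [h2, Matrix.mul_apply]
    congr 1
    funext i
    rw [hE k i, hU0]
    ring
  refine ⟨U0 * P, C, snf.a, ?_, ?_, key⟩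
  · have hP : P = Equiv.Perm.permMatrix ℤ σ⁻¹ := by
      ext k i
      simp only [P, Matrix.of_apply, Equiv.Perm.permMatrix, PEquiv.toMatrix_apply,
        Equiv.toPEquiv_apply, Option.mem_def, Option.some.injEq]
      congr 1
      rw [eq_iff_iff]
      constructor
      · intro h; rw [h]; simp
      · intro h; rw [← h]; simp
      -- i = σ⁻¹ k ↔ k = σ i (maybe swapped)
    rw [Matrix.det_mul, hP, Matrix.det_permutation]
    have hU0' : IsUnit U0.det := by
      have := b.invertibleToMatrix snf.bM
      exact Matrix.isUnit_det_of_invertible U0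
    apply hU0'.mul
    rcases Int.units_eq_one_or (Equiv.Perm.sign σ⁻¹) with h | h <;> rw [h] <;> simp
  · have := snf.bN.invertibleToMatrix bcols
    exact Matrix.isUnit_det_of_invertible C

/-- The inclusion of integer vectors into rational vectors. -/
def intVec : (Fin 2 → ℤ) →+ (Fin 2 → ℚ) where
  toFun v := fun j => (v j : ℚ)
  map_zero' := by funext j; simp
  map_add' := by intro a b; funext j; simp

/-- The subgroup of `ℚ²` consisting of vectors with integer coordinates. -/
def Zlat : AddSubgroup (Fin 2 → ℚ) where
  carrier := {v | ∀ i, ∃ k : ℤ, v i = (k : ℚ)}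
  zero_mem' := fun i => ⟨0, by simp⟩
  add_mem' := by
    rintro a b ha hb i
    obtain ⟨k, hk⟩ := ha i
    obtain ⟨l, hl⟩ := hb i
    exact ⟨k + l, by simp [hk, hl]⟩
  neg_mem' := by
    rintro a ha i
    obtain ⟨k, hk⟩ := ha i
    exact ⟨-k, by simp [hk]⟩

/-- The lattice `L(γ) = {v ∈ ℤ² : γ v ∈ ℤ²}` associated with `γ ∈ GL(2,ℚ)`. -/
def Lgam (γ : Matrix (Fin 2) (Fin 2) ℚ) : AddSubgroup (Fin 2 → ℤ) :=
  AddSubgroup.comap ((Matrix.mulVecLin γ).toAddMonoidHom.comp intVec) Zlat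

/-- Index formula: if `f = (N/D)·m` is the canonical form of `f ∈ GL(2,ℚ)`, then
`[ℤ² : L(f)] = D² / gcd(D, m₁m₄ - m₂m₃)`. -/
theorem stmt_10 (N D : ℕ) (hN : 0 < N) (hD : 0 < D) (hND : Nat.Coprime N D)
    (m : Matrix (Fin 2) (Fin 2) ℤ)
    (hgcd : Int.gcd (Int.gcd (m 0 0) (m 0 1)) (Int.gcd (m 1 0) (m 1 1)) = 1)
    (f : Matrix (Fin 2) (Fin 2) ℚ)
    (hf : f = ((N : ℚ) / (D : ℚ)) • (m.map (Int.cast : ℤ → ℚ)))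
    (hdet : f.det ≠ 0) :
    (Lgam f).index = D ^ 2 / Nat.gcd D (m 0 0 * m 1 1 - m 0 1 * m 1 0).natAbs := by
  classical
  have hD0 : (D:ℚ) ≠ 0 := Nat.cast_ne_zero.mpr hD.ne'
  -- det m ≠ 0
  have hdm : m.det ≠ 0 := by
    intro h0
    apply hdet
    rw [hf, Matrix.det_smul]
    have : (m.map (Int.cast : ℤ → ℚ)).det = ((m.det : ℤ) : ℚ) :=
      ((Int.castRingHom ℚ).map_det m).symm
    rw [this, h0]
    simp
  -- Step 1 : Lgam f = Ksub D m
  have hval : ∀ (v : Fin 2 → ℤ) i,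
      f.mulVec (intVec v) i = ((N:ℚ)/D) * ((m.mulVec v i : ℤ) : ℚ) := by
    intro v i
    rw [hf, Matrix.smul_mulVec]
    simp only [Pi.smul_apply, smul_eq_mul]
    congr 1
    simp only [Matrix.mulVec, dotProduct, Matrix.map_apply, intVec,
      AddMonoidHom.coe_mk, ZeroHom.coe_mk]
    push_cast
    rfl
  have hrat : ∀ x : ℤ, (∃ k : ℤ, ((N:ℚ)/D) * (x:ℚ) = k) ↔ (D:ℤ) ∣ x := by
    intro x
    constructor
    · rintro ⟨k, hk⟩
      rw [div_mul_eq_mul_div, div_eq_iff hD0] at hk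
      have h2 : (N:ℤ) * x = k * D := by exact_mod_cast hk
      have h3 : (D:ℤ) ∣ (N:ℤ) * x := ⟨k, by linarith⟩
      have hcop : IsCoprime (D:ℤ) (N:ℤ) := by
        rw [Int.isCoprime_iff_gcd_eq_one]
        simpa [Int.gcd] using hND.symm
      exact hcop.dvd_of_dvd_mul_left h3
    · rintro ⟨y, rfl⟩
      refine ⟨N * y, ?_⟩
      push_cast
      field_simp
  have hL : Lgam f = Ksub D m := by
    ext v
    rw [Lgam, AddSubgroup.mem_comap]
    show (∀ i, ∃ k : ℤ, f.mulVec (intVec v) i = (k:ℚ)) ↔ ∀ i, (D:ℤ) ∣ m.mulVec v i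
    constructor
    · intro h i
      obtain ⟨k, hk⟩ := h i
      rw [hval v i] at hk
      exact (hrat _).mp ⟨k, hk⟩
    · intro h i
      obtain ⟨k, hk⟩ := (hrat _).mpr (h i)
      exact ⟨k, by rw [hval v i]; exact hk⟩
  -- Step 2 : SNF
  obtain ⟨U, C, a, hU, hC, hm⟩ := exists_snf m hdm
  rw [Matrix.mul_assoc] at hm
  -- Step 3 : index computation
  have hidx : (Lgam f).index =
      (D / Nat.gcd D (a 0).natAbs) * (D / Nat.gcd D (a 1).natAbs) := by
    rw [hL, hm, Ksub_unit_mul hU, Ksub_mul_unit hC, Ksub_diagonal_index hD]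
  -- Step 4 : arithmetic
  set A0 := (a 0).natAbs
  set A1 := (a 1).natAbs
  have hdet2 : (m 0 0 * m 1 1 - m 0 1 * m 1 0).natAbs = A0 * A1 := by
    have h1 : m.det = m 0 0 * m 1 1 - m 0 1 * m 1 0 := Matrix.det_fin_two m
    have h2 : m.det = U.det * ((a 0 * a 1) * C.det) := by
      rw [hm, Matrix.det_mul, Matrix.det_mul, Matrix.det_diagonal, Fin.prod_univ_two]
    have hUnat : U.det.natAbs = 1 := Int.isUnit_iff_natAbs_eq.mp hU
    have hCnat : C.det.natAbs = 1 := Int.isUnit_iff_natAbs_eq.mp hC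
    rw [← h1, h2]
    simp [Int.natAbs_mul, hUnat, hCnat, A0, A1]
  have hcop01 : Nat.Coprime A0 A1 := by
    set g := Nat.gcd A0 A1 with hg
    have hdvd : ∀ i j, (g:ℤ) ∣ m i j := by
      intro i j
      rw [hm, Matrix.mul_apply]
      apply Finset.dvd_sum
      intro l _
      rw [Matrix.diagonal_mul]
      have : (g:ℤ) ∣ a l := by
        rw [Int.natCast_dvd]
        fin_cases l
        · exact Nat.gcd_dvd_left _ _
        · exact Nat.gcd_dvd_right _ _
      exact Dvd.dvd.mul_left (this.mul_right _) _
    have hdvd1 : g ∣ 1 := by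
      rw [← hgcd]
      apply Nat.dvd_gcd <;> apply Nat.dvd_gcd <;>
        · rw [← Int.natCast_dvd]; apply hdvd
    exact Nat.eq_one_of_dvd_one hdvd1
  rw [hidx, hdet2, gcd_mul_of_coprime hcop01]
  rw [Nat.div_mul_div_comm (Nat.gcd_dvd_left D A0) (Nat.gcd_dvd_left D A1), ← pow_two]
end

section
/- Let F ∈ ℤ[X,Y] be a binary form of degree d ≥ 3 with nonzero discriminant, and suppose σ ∈ Aut(F,ℤ) has order 3 and is conjugate in GL(2,ℤ) to R = [[0,1],[-1,-1]]. Then the value sets of F(X,Y) and of G₁(X,Y) := F(2X,Y) over ℤ² are equal: F(ℤ²) = {F(2x,y) : (x,y) ∈ ℤ²}. -/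
open MvPolynomial

/-- Composition of an integral binary form with an integer matrix:
`(F ∘ γ)(X,Y) = F(aX + bY, cX + dY)` for `γ = [[a,b],[c,d]]`. -/
noncomputable def compZ (F : MvPolynomial (Fin 2) ℤ) (γ : Matrix (Fin 2) (Fin 2) ℤ) :
    MvPolynomial (Fin 2) ℤ :=
  aeval (fun i => C (γ i 0) * X 0 + C (γ i 1) * X 1) F

lemma compZ_eval (F : MvPolynomial (Fin 2) ℤ) (γ : Matrix (Fin 2) (Fin 2) ℤ) (u v : ℤ) :
    eval ![u, v] (compZ F γ)
      = eval ![γ 0 0 * u + γ 0 1 * v, γ 1 0 * u + γ 1 1 * v] F := by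
  rw [compZ, ← coe_aeval_eq_eval, RingHom.coe_coe, comp_aeval_apply]
  rw [← coe_aeval_eq_eval, RingHom.coe_coe]
  have hfun : (fun i : Fin 2 => (aeval ![u, v]) (C (γ i 0) * X 0 + C (γ i 1) * X 1))
      = ![γ 0 0 * u + γ 0 1 * v, γ 1 0 * u + γ 1 1 * v] := by
    funext i; fin_cases i <;> simp
  rw [hfun]

lemma parity_conj : ∀ T' S : Matrix (Fin 2) (Fin 2) (ZMod 2), T'.det = 1 →
    T' * S = !![0, 1; -1, -1] * T' → S 0 1 = 1 ∧ S 1 0 = 1 ∧ S 0 0 + S 1 1 = 1 := by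
  decide

lemma parity_three : ∀ a b c dd mm nn : ZMod 2, b = 1 → c = 1 → a + dd = 1 →
    mm = 0 ∨ a * mm + b * nn = 0
      ∨ a * (a * mm + b * nn) + b * (c * mm + dd * nn) = 0 := by
  decide

/-- If `F ∈ Bin(d,ℤ)`, `d ≥ 3`, has an automorphism `σ` of order 3 which is
`GL(2,ℤ)`-conjugate to `R = [[0,1],[-1,-1]]`, then `F(X,Y)` and `F(2X,Y)` have
the same value set over `ℤ²`. -/
theorem stmt_18 (d : ℕ) (hd : 3 ≤ d) (F : MvPolynomial (Fin 2) ℤ)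
    (hF : F.IsHomogeneous d)
    (hdisc : Squarefree (MvPolynomial.map (Int.castRingHom ℚ) F))
    (σ : Matrix (Fin 2) (Fin 2) ℤ)
    (hσAut : compZ F σ = F)
    (hσ3 : σ ^ 3 = 1) (hσ1 : σ ≠ 1)
    (hconj : ∃ T : Matrix (Fin 2) (Fin 2) ℤ, (T.det = 1 ∨ T.det = -1) ∧
      σ = T⁻¹ * !![0, 1; -1, -1] * T) :
    {z : ℤ | ∃ x y : ℤ, eval ![x, y] F = z}
      = {z : ℤ | ∃ x y : ℤ, eval ![2 * x, y] F = z} := by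
  obtain ⟨T, hTdet, hTσ⟩ := hconj
  have hTu : IsUnit T.det := by
    rcases hTdet with h | h <;> rw [h] <;> simp [Int.isUnit_iff]
  have hTσ2 : T * σ = !![0, 1; -1, -1] * T := by
    rw [hTσ, ← mul_assoc T (T⁻¹ * !![0, 1; -1, -1]) T,
      ← mul_assoc T T⁻¹ !![0, 1; -1, -1], Matrix.mul_nonsing_inv T hTu, one_mul]
  set f := Int.castRingHom (ZMod 2) with hf
  have hmap : T.map f * σ.map f = (!![0, 1; -1, -1] : Matrix (Fin 2) (Fin 2) ℤ).map f
      * T.map f := by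
    rw [← Matrix.map_mul, ← Matrix.map_mul, hTσ2]
  have hRmap : (!![0, 1; -1, -1] : Matrix (Fin 2) (Fin 2) ℤ).map f
      = !![0, 1; -1, -1] := by
    ext i j; fin_cases i <;> fin_cases j <;> simp [f]
  have hdet' : (T.map f).det = 1 := by
    rw [show T.map ⇑f = f.mapMatrix T from rfl, ← RingHom.map_det]
    rcases hTdet with h | h <;> rw [h] <;> decide
  have hpar := parity_conj (T.map f) (σ.map f) hdet' (by rw [hmap, hRmap])
  simp only [Matrix.map_apply] at hpar
  obtain ⟨hb, hc, had⟩ := hpar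
  have key : ∀ u v : ℤ,
      eval ![σ 0 0 * u + σ 0 1 * v, σ 1 0 * u + σ 1 1 * v] F = eval ![u, v] F := by
    intro u v
    conv_rhs => rw [← hσAut]
    rw [compZ_eval]
  ext z
  simp only [Set.mem_setOf_eq]
  constructor
  · rintro ⟨m, n, rfl⟩
    set w2 : ℤ := σ 0 0 * m + σ 0 1 * n with hw2
    set z2 : ℤ := σ 1 0 * m + σ 1 1 * n with hz2
    have h1 : eval ![w2, z2] F = eval ![m, n] F := key m n
    have h2 : eval ![σ 0 0 * w2 + σ 0 1 * z2, σ 1 0 * w2 + σ 1 1 * z2] F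
        = eval ![w2, z2] F := key w2 z2
    have htri := parity_three (f (σ 0 0)) (f (σ 0 1)) (f (σ 1 0)) (f (σ 1 1))
      (f m) (f n) hb hc had
    rcases htri with h | h | h
    · obtain ⟨x, hx⟩ := (ZMod.intCast_zmod_eq_zero_iff_dvd m 2).mp h
      have hx' : m = 2 * x := by exact_mod_cast hx
      exact ⟨x, n, by rw [← hx']⟩
    · have hfw : f w2 = 0 := by rw [hw2, map_add, map_mul, map_mul]; exact h
      obtain ⟨x, hx⟩ := (ZMod.intCast_zmod_eq_zero_iff_dvd w2 2).mp hfw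
      have hx' : w2 = 2 * x := by exact_mod_cast hx
      exact ⟨x, z2, by rw [← hx']; exact h1⟩
    · have hfw : f (σ 0 0 * w2 + σ 0 1 * z2) = 0 := by
        simp only [hw2, hz2, map_add, map_mul]; exact h
      obtain ⟨x, hx⟩ := (ZMod.intCast_zmod_eq_zero_iff_dvd (σ 0 0 * w2 + σ 0 1 * z2) 2).mp hfw
      have hx' : σ 0 0 * w2 + σ 0 1 * z2 = 2 * x := by exact_mod_cast hx
      exact ⟨x, σ 1 0 * w2 + σ 1 1 * z2, by rw [← hx', h2, h1]⟩
  · rintro ⟨x, y, h⟩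
    exact ⟨2 * x, y, h⟩
end
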